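/- Let s₁, s₂ ≥ 2, and G be a triangle-free graph of order at least 3 with σ₂(G) ≥ 2(s₁ + s₂) − 1. Let X = {v : d_G(v) ≤ s₁ + s₂ − 1} and let α ∈ {0, 1}. If U ⊆ V(G) with |U| ≤ 3 and every vertex x ∈ V(G) \ U has at most 1 + α neighbors in U, then G − U is non-complete and contains an (s₁ − α; X)-feasible induced subgraph and an (s₂ − α; X)-feasible induced subgraph of G. -/

import Mathlib

/-- Degree of `u` within the induced subgraph on the vertex set `A`. -/
def degIn {V : Type*} [Fintype V] [DecidableEq V] (G : SimpleGraph V)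
    [DecidableRel G.Adj] (A : Finset V) (u : V) : ℕ :=
  (G.neighborFinset u ∩ A).card

/-- The induced subgraph on `A` is non-complete. -/
def NonCompleteOn {V : Type*} (G : SimpleGraph V) (A : Finset V) : Prop :=
  ∃ u ∈ A, ∃ v ∈ A, u ≠ v ∧ ¬G.Adj u v

/-- The induced subgraph on `H` is `(s; X)`-feasible in `G`. -/
def Feasible {V : Type*} [Fintype V] [DecidableEq V] (G : SimpleGraph V)
    [DecidableRel G.Adj] (s : ℕ) (X H : Finset V) : Prop :=
  (∀ u ∈ H, u ∉ X → s < degIn G H u) ∧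
  (∀ u ∈ H, u ∉ X → ∀ v ∈ H, v ∈ X → ¬G.Adj u v → 2 * s < degIn G H u + degIn G H v) ∧
  NonCompleteOn G H

/-- The induced subgraph on `A` is `(s; X)`-degenerate in `G`. -/
def Degenerate {V : Type*} [Fintype V] [DecidableEq V] (G : SimpleGraph V)
    [DecidableRel G.Adj] (s : ℕ) (X A : Finset V) : Prop :=
  NonCompleteOn G A ∧ ∀ H ⊆ A, ¬Feasible G s X H

theorem stmt_11 {V : Type*} [Fintype V] [DecidableEq V]
    (G : SimpleGraph V) [DecidableRel G.Adj] (s₁ s₂ : ℕ) (hs₁ : 2 ≤ s₁) (hs₂ : 2 ≤ s₂)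
    (htf : G.CliqueFree 3) (hcard : 3 ≤ Fintype.card V)
    (hσ : ∀ u v : V, u ≠ v → ¬G.Adj u v →
      2 * (s₁ + s₂) - 1 ≤ G.degree u + G.degree v)
    (X : Finset V) (hX : X = Finset.univ.filter (fun v => G.degree v ≤ s₁ + s₂ - 1))
    (α : ℕ) (hα : α ≤ 1) (U : Finset V) (hU : U.card ≤ 3)
    (hUdeg : ∀ x ∈ Finset.univ \ U, degIn G U x ≤ 1 + α) :
    NonCompleteOn G (Finset.univ \ U) ∧
    (∃ H ⊆ Finset.univ \ U, Feasible G (s₁ - α) X H) ∧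
    (∃ H ⊆ Finset.univ \ U, Feasible G (s₂ - α) X H) := by
  classical
  -- helper: no shared neighbors create edges (triangle-free)
  have htf' : ∀ a b c : V, G.Adj a b → G.Adj a c → ¬G.Adj b c := by
    intro a b c hab hac hbc
    exact htf {a, b, c} (SimpleGraph.is3Clique_triple_iff.mpr ⟨hab, hac, hbc⟩)
  have hdU : ∀ x, x ∉ U → degIn G U x ≤ 1 + α := by
    intro x hx
    exact hUdeg x (Finset.mem_sdiff.mpr ⟨Finset.mem_univ x, hx⟩)
  have hsplit : ∀ u : V, degIn G U u + degIn G (Finset.univ \ U) u = G.degree u := by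
    intro u
    unfold degIn
    rw [← SimpleGraph.card_neighborFinset_eq_degree]
    have h1 : G.neighborFinset u ∩ (Finset.univ \ U) = G.neighborFinset u \ U := by
      ext x; simp
    rw [h1, Finset.card_inter_add_card_sdiff]
  -- a nonadjacent pair exists
  obtain ⟨x, y, hxy, hnadj⟩ : ∃ x y : V, x ≠ y ∧ ¬G.Adj x y := by
    by_contra h
    push_neg at h
    obtain ⟨s, _, hs3⟩ := Finset.exists_subset_card_eq (s := Finset.univ) (n := 3)
      (by simpa using hcard)
    obtain ⟨a, b, c, hab, hac, hbc, rfl⟩ := Finset.card_eq_three.mp hs3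
    exact htf {a, b, c}
      (SimpleGraph.is3Clique_triple_iff.mpr ⟨h a b hab, h a c hac, h b c hbc⟩)
  have hxylo := hσ x y hxy hnadj
  -- key claim: a vertex outside U of degree ≥ s₁ + s₂ exists
  obtain ⟨w, hwU, hwdeg⟩ : ∃ w, w ∉ U ∧ s₁ + s₂ ≤ G.degree w := by
    by_contra h
    push_neg at h
    have hpair : ∀ a b : V, a ∉ U → b ∉ U → a ≠ b → G.Adj a b := by
      intro a b ha hb hab
      by_contra hn
      have h1 := hσ a b hab hn
      have h2 := h a ha
      have h3 := h b hb
      omega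
    have hH2 : (Finset.univ \ U).card ≤ 2 := by
      by_contra hH
      push_neg at hH
      obtain ⟨s, hs, hs3⟩ := Finset.exists_subset_card_eq (s := Finset.univ \ U) (n := 3) hH
      obtain ⟨a, b, c, hab, hac, hbc, rfl⟩ := Finset.card_eq_three.mp hs3
      have ha := Finset.mem_sdiff.mp (hs (by simp : a ∈ ({a, b, c} : Finset V)))
      have hb := Finset.mem_sdiff.mp (hs (by simp : b ∈ ({a, b, c} : Finset V)))
      have hc := Finset.mem_sdiff.mp (hs (by simp : c ∈ ({a, b, c} : Finset V)))
      exact htf {a, b, c} (SimpleGraph.is3Clique_triple_iff.mpr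
        ⟨hpair a b ha.2 hb.2 hab, hpair a c ha.2 hc.2 hac, hpair b c hb.2 hc.2 hbc⟩)
    have hcards : Fintype.card V ≤ U.card + 2 := by
      have h1 := Finset.card_sdiff_add_card_eq_card (Finset.subset_univ U)
      rw [Finset.card_univ] at h1
      omega
    have hdx := G.degree_lt_card_verts x
    have hdy := G.degree_lt_card_verts y
    -- hence card V = 5, |U| = 3
    have hc5 : Fintype.card V = 5 ∧ U.card = 3 := by omega
    -- pick a ∈ univ \ U
    have hHne : (Finset.univ \ U).Nonempty := by
      rw [← Finset.card_pos]
      have h1 := Finset.card_sdiff_add_card_eq_card (Finset.subset_univ U)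
      rw [Finset.card_univ] at h1
      omega
    obtain ⟨a, haH⟩ := hHne
    have haU : a ∉ U := (Finset.mem_sdiff.mp haH).2
    -- degIn on univ \ U of a is at most |univ \ U| - 1 ≤ 1
    have hda1 : degIn G (Finset.univ \ U) a ≤ 1 := by
      have hsub : G.neighborFinset a ∩ (Finset.univ \ U) ⊆ (Finset.univ \ U).erase a := by
        intro z hz
        rw [Finset.mem_erase]
        refine ⟨?_, (Finset.mem_inter.mp hz).2⟩
        intro hza
        have := (Finset.mem_inter.mp hz).1
        rw [SimpleGraph.mem_neighborFinset, hza] at this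
        exact G.loopless.irrefl a this
      have := Finset.card_le_card hsub
      have h2 : ((Finset.univ \ U).erase a).card ≤ 1 := by
        have := Finset.card_erase_of_mem haH
        have h1 := Finset.card_sdiff_add_card_eq_card (Finset.subset_univ U)
        rw [Finset.card_univ] at h1
        omega
      unfold degIn
      omega
    have hda : G.degree a ≤ 3 := by
      have h1 := hsplit a
      have h2 := hdU a haU
      omega
    -- a has a non-neighbor in U
    obtain ⟨u, huU, hunadj⟩ : ∃ u ∈ U, u ∉ G.neighborFinset a := by
      by_contra hcon
      push_neg at hcon
      have hsub : U ⊆ G.neighborFinset a ∩ U := by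
        intro z hz; exact Finset.mem_inter.mpr ⟨hcon z hz, hz⟩
      have := Finset.card_le_card hsub
      have h2 := hdU a haU
      unfold degIn at h2
      omega
    have hua : u ≠ a := fun h => (h ▸ haU) huU
    have hnua : ¬G.Adj u a := by
      intro h
      exact hunadj ((G.mem_neighborFinset a u).mpr h.symm)
    have hdu : 4 ≤ G.degree u := by
      have := hσ u a hua hnua
      omega
    -- then u is adjacent to everything else, contradiction
    have hsub : G.neighborFinset u ⊆ Finset.univ.erase u := by
      intro z hz
      rw [Finset.mem_erase]
      refine ⟨?_, Finset.mem_univ z⟩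
      intro hzu
      rw [SimpleGraph.mem_neighborFinset, hzu] at hz
      exact G.loopless.irrefl u hz
    have heq : G.neighborFinset u = Finset.univ.erase u := by
      apply Finset.eq_of_subset_of_card_le hsub
      rw [Finset.card_erase_of_mem (Finset.mem_univ u), Finset.card_univ,
        SimpleGraph.card_neighborFinset_eq_degree]
      omega
    have : a ∈ G.neighborFinset u := by
      rw [heq, Finset.mem_erase]
      exact ⟨fun h => hua h.symm, Finset.mem_univ a⟩
    exact hnua ((G.mem_neighborFinset u a).mp this)
  -- w has ≥ 2 neighbors outside U, giving non-completeness
  have hwH : 2 ≤ degIn G (Finset.univ \ U) w := by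
    have h1 := hsplit w
    have h2 := hdU w hwU
    omega
  have hnc : NonCompleteOn G (Finset.univ \ U) := by
    obtain ⟨a, ha, b, hb, hab⟩ :=
      Finset.one_lt_card.mp (by unfold degIn at hwH; omega :
        1 < (G.neighborFinset w ∩ (Finset.univ \ U)).card)
    obtain ⟨ha1, ha2⟩ := Finset.mem_inter.mp ha
    obtain ⟨hb1, hb2⟩ := Finset.mem_inter.mp hb
    exact ⟨a, ha2, b, hb2, hab,
      htf' w a b ((G.mem_neighborFinset w a).mp ha1)
        ((G.mem_neighborFinset w b).mp hb1)⟩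
  -- feasibility of the whole of univ \ U
  have hXdeg : ∀ u : V, u ∉ X → s₁ + s₂ ≤ G.degree u := by
    intro u hu
    rw [hX, Finset.mem_filter] at hu
    push_neg at hu
    have := hu (Finset.mem_univ u)
    omega
  have feas : ∀ t : ℕ, t + 2 ≤ s₁ + s₂ → Feasible G (t - α) X (Finset.univ \ U) := by
    intro t ht
    refine ⟨?_, ?_, hnc⟩
    · intro u hu huX
      have h1 := hsplit u
      have h2 := hdU u (Finset.mem_sdiff.mp hu).2
      have h3 := hXdeg u huX
      omega
    · intro u hu huX v hv hvX hnadjuv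
      have huv : u ≠ v := fun h => huX (h ▸ hvX)
      have h0 := hσ u v huv hnadjuv
      have h1 := hsplit u
      have h1' := hsplit v
      have h2 := hdU u (Finset.mem_sdiff.mp hu).2
      have h2' := hdU v (Finset.mem_sdiff.mp hv).2
      omega
  exact ⟨hnc, ⟨Finset.univ \ U, Finset.Subset.refl _, feas s₁ (by omega)⟩,
    ⟨Finset.univ \ U, Finset.Subset.refl _, feas s₂ (by omega)⟩⟩
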